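/- Fix complex channel matrices H_r (n_r × n_t) and H_e (n_e × n_t), and fix an n_r × n_e matrix Φ with σ_max(Φ) < 1. Define for positive semidefinite K the matrix Λ(K) = I + H_r K H_r† − (Φ + H_r K H_e†)(I + H_e K H_e†)⁻¹(Φ† + H_e K H_r†). Then K ↦ log det Λ(K) is concave on the set of positive semidefinite n_t × n_t matrices. -/

import Mathlib

open Matrix
open scoped ComplexOrder

namespace StmtAux

variable {n : Type*} [Fintype n] [DecidableEq n]

lemma isHermitian_real_smul {A : Matrix n n ℂ} (hA : A.IsHermitian) (r : ℝ) :
    (r • A).IsHermitian := by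
  unfold Matrix.IsHermitian
  rw [conjTranspose_smul, hA.eq, star_trivial]

lemma posSemidef_real_smul {A : Matrix n n ℂ} (hA : A.PosSemidef) {r : ℝ} (hr : 0 ≤ r) :
    (r • A).PosSemidef := by
  refine .of_dotProduct_mulVec_nonneg (isHermitian_real_smul hA.1 r) fun x => ?_
  rw [smul_mulVec, dotProduct_smul]
  have h := hA.dotProduct_mulVec_nonneg x
  rw [Complex.nonneg_iff] at h ⊢
  constructor
  · simp only [Complex.real_smul, Complex.mul_re, Complex.ofReal_re, Complex.ofReal_im, zero_mul,
      sub_zero]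
    exact mul_nonneg hr h.1
  · simp only [Complex.real_smul, Complex.mul_im, Complex.ofReal_re, Complex.ofReal_im, zero_mul,
      add_zero, ← h.2, mul_zero]

lemma posDef_real_smul {A : Matrix n n ℂ} (hA : A.PosDef) {r : ℝ} (hr : 0 < r) :
    (r • A).PosDef := by
  refine .of_dotProduct_mulVec_pos (isHermitian_real_smul hA.1 r) fun x hx => ?_
  rw [smul_mulVec, dotProduct_smul]
  have h := hA.dotProduct_mulVec_pos hx
  rw [Complex.pos_iff] at h ⊢
  constructor
  · simp only [Complex.real_smul, Complex.mul_re, Complex.ofReal_re, Complex.ofReal_im, zero_mul,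
      sub_zero]
    exact mul_pos hr h.1
  · simp only [Complex.real_smul, Complex.mul_im, Complex.ofReal_re, Complex.ofReal_im, zero_mul,
      add_zero, ← h.2, mul_zero]

/-- determinant of a Hermitian matrix is real -/
lemma det_eq_re {A : Matrix n n ℂ} (hA : A.IsHermitian) : A.det = (A.det.re : ℂ) := by
  have : (starRingEnd ℂ) A.det = A.det := by
    have := Matrix.det_conjTranspose A
    rw [hA.eq] at this
    exact this.symm
  exact ((Complex.conj_eq_iff_re).mp this).symm


/-- `(θ•1 + η•C).det` for Hermitian `C` in terms of eigenvalues. -/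
lemma det_smul_one_add_smul {C : Matrix n n ℂ} (hC : C.IsHermitian) (θ η : ℝ) :
    (θ • (1 : Matrix n n ℂ) + η • C).det
      = ((∏ i, (θ + η * hC.eigenvalues i) : ℝ) : ℂ) := by
  set U : Matrix n n ℂ := (hC.eigenvectorUnitary : Matrix n n ℂ) with hU
  have hUU : U * star U = 1 := (Matrix.mem_unitaryGroup_iff).mp hC.eigenvectorUnitary.2
  have key : θ • (1 : Matrix n n ℂ) + η • C
      = U * (θ • (1 : Matrix n n ℂ) + η • diagonal (RCLike.ofReal ∘ hC.eigenvalues)) * star U := by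
    rw [Matrix.mul_add, Matrix.add_mul, Matrix.mul_smul, Matrix.mul_smul,
      Matrix.smul_mul, Matrix.smul_mul, Matrix.mul_one, hUU]
    have hs := hC.spectral_theorem
    rw [Unitary.conjStarAlgAut_apply] at hs
    exact congrArg (fun X => θ • (1 : Matrix n n ℂ) + η • X) hs
  have hdetU : U.det * (star U).det = 1 := by
    rw [← Matrix.det_mul, hUU, Matrix.det_one]
  have hdiag : θ • (1 : Matrix n n ℂ) + η • diagonal (RCLike.ofReal ∘ hC.eigenvalues)
      = diagonal (fun i => ((θ + η * hC.eigenvalues i : ℝ) : ℂ)) := by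
    ext i j
    rcases eq_or_ne i j with h | h <;>
      simp [Matrix.diagonal_apply, Matrix.one_apply, h, Complex.real_smul]
  rw [key, Matrix.det_mul, Matrix.det_mul, mul_right_comm, hdetU, one_mul, hdiag,
    Matrix.det_diagonal]
  push_cast
  rfl

lemma posDef_conj_of_invertible {A S : Matrix n n ℂ} (hA : A.PosDef)
    (hS : S.IsHermitian) (hdet : S.det ≠ 0) : (S * A * S).PosDef := by
  have : Invertible S := S.invertibleOfIsUnitDet (isUnit_iff_ne_zero.mpr hdet)
  refine .of_dotProduct_mulVec_pos (by
    calc (S * A * S)ᴴ = Sᴴ * Aᴴ * Sᴴ := by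
          rw [Matrix.conjTranspose_mul, Matrix.conjTranspose_mul, Matrix.mul_assoc]
      _ = S * A * S := by rw [hA.1.eq, hS.eq]) fun x hx => ?_
  have hx' : S *ᵥ x ≠ 0 := fun h => hx
    (Matrix.mulVec_injective_of_invertible S (by rw [h, Matrix.mulVec_zero]))
  have e : star x ⬝ᵥ (S * A * S) *ᵥ x = star (S *ᵥ x) ⬝ᵥ A *ᵥ (S *ᵥ x) := by
    rw [← Matrix.mulVec_mulVec, ← Matrix.mulVec_mulVec, dotProduct_mulVec, star_mulVec, hS.eq]
  rw [e]
  exact hA.dotProduct_mulVec_pos hx'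

section sqrtdef
open scoped MatrixOrder

noncomputable def _root_.Matrix.PosSemidef.sqrt {A : Matrix n n ℂ} (_hA : A.PosSemidef) :
    Matrix n n ℂ := CFC.sqrt A

lemma _root_.Matrix.PosSemidef.sqrt_mul_self {A : Matrix n n ℂ} (hA : A.PosSemidef) :
    hA.sqrt * hA.sqrt = A := CFC.sqrt_mul_sqrt_self A hA.nonneg

lemma _root_.Matrix.PosSemidef.posSemidef_sqrt {A : Matrix n n ℂ} (hA : A.PosSemidef) :
    hA.sqrt.PosSemidef := (CFC.sqrt_nonneg A).posSemidef

end sqrtdef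

section sqrtfacts

variable {A B : Matrix n n ℂ} (hA : A.PosDef)

lemma sqrt_facts :
    (hA.posSemidef.sqrt * hA.posSemidef.sqrt = A) ∧ hA.posSemidef.sqrt.det ≠ 0 ∧
      (hA.posSemidef.sqrt⁻¹.IsHermitian) ∧ hA.posSemidef.sqrt * hA.posSemidef.sqrt⁻¹ = 1 ∧
      hA.posSemidef.sqrt⁻¹ * hA.posSemidef.sqrt = 1 := by
  set S := hA.posSemidef.sqrt with hS
  have hSS : S * S = A := hA.posSemidef.sqrt_mul_self
  have hdet : S.det ≠ 0 := by
    intro h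
    have : A.det = 0 := by rw [← hSS, Matrix.det_mul, h, mul_zero]
    exact hA.det_pos.ne' this
  exact ⟨hSS, hdet, (hA.posSemidef.posSemidef_sqrt.1).inv,
    Matrix.mul_nonsing_inv _ (isUnit_iff_ne_zero.mpr hdet), Matrix.nonsing_inv_mul _ (isUnit_iff_ne_zero.mpr hdet)⟩

lemma factorization (B : Matrix n n ℂ) (θ η : ℝ) :
    θ • A + η • B = hA.posSemidef.sqrt *
      (θ • (1 : Matrix n n ℂ) + η • (hA.posSemidef.sqrt⁻¹ * B * hA.posSemidef.sqrt⁻¹)) *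
      hA.posSemidef.sqrt := by
  obtain ⟨hSS, hdet, hinvH, hSi, hiS⟩ := sqrt_facts hA
  set S := hA.posSemidef.sqrt with hS
  rw [Matrix.mul_add, Matrix.add_mul]
  congr 1
  · rw [Matrix.mul_smul, Matrix.mul_one, Matrix.smul_mul, hSS]
  · rw [Matrix.mul_smul, Matrix.smul_mul]
    congr 1
    calc B = S * S⁻¹ * B * (S⁻¹ * S) := by rw [hSi, hiS, Matrix.one_mul, Matrix.mul_one]
      _ = S * (S⁻¹ * B * S⁻¹) * S := by simp only [Matrix.mul_assoc]

/-- determinant factorization for `θ • A + η • B` with `A` posdef. -/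
lemma det_re_smul_add (B : Matrix n n ℂ)
    (hC : (hA.posSemidef.sqrt⁻¹ * B * hA.posSemidef.sqrt⁻¹).IsHermitian) (θ η : ℝ) :
    (θ • A + η • B).det.re = A.det.re * ∏ i, (θ + η * hC.eigenvalues i) := by
  obtain ⟨hSS, hdet, hinvH, hSi, hiS⟩ := sqrt_facts hA
  set S := hA.posSemidef.sqrt with hS
  have h1 : (θ • A + η • B).det
      = A.det * ((∏ i, (θ + η * hC.eigenvalues i) : ℝ) : ℂ) := by
    rw [factorization hA B θ η, Matrix.det_mul, Matrix.det_mul, mul_right_comm,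
      ← Matrix.det_mul, hSS, det_smul_one_add_smul hC θ η]
  rw [h1, Complex.mul_re, Complex.ofReal_re, Complex.ofReal_im, mul_zero, sub_zero]

end sqrtfacts

/-- Monotonicity: `det A ≤ det (A + B)` for `A` posdef, `B` possemidef. -/
lemma det_re_le_det_re_add {A B : Matrix n n ℂ} (hA : A.PosDef) (hB : B.PosSemidef) :
    A.det.re ≤ (A + B).det.re := by
  obtain ⟨hSS, hdet, hinvH, hSi, hiS⟩ := sqrt_facts hA
  set S := hA.posSemidef.sqrt with hS
  have hC : (S⁻¹ * B * S⁻¹).PosSemidef := by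
    have := hB.conjTranspose_mul_mul_same (B := S⁻¹)
    rwa [hinvH.eq] at this
  have key := det_re_smul_add hA B hC.1 1 1
  simp only [one_smul] at key
  rw [key]
  have hApos : 0 < A.det.re := (Complex.pos_iff.mp hA.det_pos).1
  have hprod : (1 : ℝ) ≤ ∏ i, (1 + 1 * hC.1.eigenvalues i) := by
    calc (1 : ℝ) = ∏ _i : n, (1 : ℝ) := by simp
      _ ≤ ∏ i, (1 + 1 * hC.1.eigenvalues i) := by
          apply Finset.prod_le_prod (fun i _ => by norm_num)
          intro i _
          have := hC.eigenvalues_nonneg i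
          linarith
  nlinarith

/-- Concavity of `log det` on posdef matrices. -/
lemma log_det_re_concave {A B : Matrix n n ℂ} (hA : A.PosDef) (hB : B.PosDef)
    {θ η : ℝ} (hθ : 0 ≤ θ) (hη : 0 ≤ η) (hθη : θ + η = 1) :
    θ * Real.log A.det.re + η * Real.log B.det.re
      ≤ Real.log ((θ • A + η • B).det.re) := by
  obtain ⟨hSS, hdet, hinvH, hSi, hiS⟩ := sqrt_facts hA
  set S := hA.posSemidef.sqrt with hS
  have hdetinv : S⁻¹.det ≠ 0 := by
    intro h
    have : (1 : Matrix n n ℂ).det = 0 := by rw [← hiS, Matrix.det_mul, h, zero_mul]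
    simp at this
  have hC : (S⁻¹ * B * S⁻¹).PosDef := posDef_conj_of_invertible hB hinvH hdetinv
  set C := S⁻¹ * B * S⁻¹ with hCdef
  have hlam : ∀ i, 0 < hC.1.eigenvalues i := hC.eigenvalues_pos
  have hApos : 0 < A.det.re := (Complex.pos_iff.mp hA.det_pos).1
  have hBpos : 0 < B.det.re := (Complex.pos_iff.mp hB.det_pos).1
  have hCpos : 0 < C.det.re := (Complex.pos_iff.mp hC.det_pos).1
  -- det C * det A = det B
  have hdetCAB : C.det.re * A.det.re = B.det.re := by
    have h1 : S⁻¹.det * S.det = 1 := by rw [← Matrix.det_mul, hiS, Matrix.det_one]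
    have h2 : C.det * A.det = B.det := by
      rw [hCdef, ← hSS, Matrix.det_mul, Matrix.det_mul, Matrix.det_mul]
      calc S⁻¹.det * B.det * S⁻¹.det * (S.det * S.det)
          = B.det * ((S⁻¹.det * S.det) * (S⁻¹.det * S.det)) := by ring
        _ = B.det := by rw [h1, one_mul, mul_one]
    have h3 := congrArg Complex.re h2
    rwa [det_eq_re hC.1, det_eq_re hA.1, ← Complex.ofReal_mul, Complex.ofReal_re] at h3
  -- product of eigenvalues of C
  have hprodC : ∏ i, hC.1.eigenvalues i = C.det.re := by
    have h := hC.1.det_eq_prod_eigenvalues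
    rw [h]
    norm_cast
  have key := det_re_smul_add hA B hC.1 θ η
  rw [key]
  have hpos : ∀ i, 0 < θ + η * hC.1.eigenvalues i := by
    intro i
    rcases eq_or_lt_of_le hη with h | h
    · have : θ = 1 := by linarith
      rw [this]; nlinarith [hlam i]
    · nlinarith [hlam i]
  have hprodpos : 0 < ∏ i, (θ + η * hC.1.eigenvalues i) :=
    Finset.prod_pos fun i _ => hpos i
  rw [Real.log_mul hApos.ne' hprodpos.ne',
    Real.log_prod fun i _ => (hpos i).ne']
  have hstep : ∀ i, η * Real.log (hC.1.eigenvalues i) ≤ Real.log (θ + η * hC.1.eigenvalues i) := by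
    intro i
    have hgm : (hC.1.eigenvalues i) ^ η ≤ θ + η * hC.1.eigenvalues i := by
      have := Real.geom_mean_le_arith_mean2_weighted hθ hη zero_le_one (hlam i).le hθη
      simpa using this
    calc η * Real.log (hC.1.eigenvalues i) = Real.log ((hC.1.eigenvalues i) ^ η) := by
          rw [Real.log_rpow (hlam i)]
      _ ≤ Real.log (θ + η * hC.1.eigenvalues i) :=
          Real.log_le_log (Real.rpow_pos_of_pos (hlam i) η) hgm
  have hsum : η * Real.log C.det.re ≤ ∑ i, Real.log (θ + η * hC.1.eigenvalues i) := by
    rw [← hprodC, Real.log_prod fun i _ => (hlam i).ne', Finset.mul_sum]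
    exact Finset.sum_le_sum fun i _ => hstep i
  have hlogC : Real.log C.det.re = Real.log B.det.re - Real.log A.det.re := by
    rw [← hdetCAB, Real.log_mul hCpos.ne' hApos.ne']
    ring
  rw [hlogC] at hsum
  have hθ1 : θ = 1 - η := by linarith
  rw [hθ1] at hsum ⊢
  ring_nf
  ring_nf at hsum
  linarith [hsum]

section blocks

variable {m p : Type*} [Fintype m] [Fintype p] [DecidableEq m] [DecidableEq p]

lemma posDef_fromBlocks₁₁ {A : Matrix m m ℂ} (B : Matrix m p ℂ) {D : Matrix p p ℂ}
    (hA : A.PosDef) (hschur : (D - Bᴴ * A⁻¹ * B).PosDef) :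
    (fromBlocks A B Bᴴ D).PosDef := by
  haveI : Invertible A := A.invertibleOfIsUnitDet (isUnit_iff_ne_zero.mpr hA.det_pos.ne')
  refine .of_dotProduct_mulVec_pos ((Matrix.IsHermitian.fromBlocks₁₁ B D hA.1).mpr hschur.1) fun x hx => ?_
  have hxeq : x = (x ∘ Sum.inl) ⊕ᵥ (x ∘ Sum.inr) := by
    funext i; cases i <;> rfl
  rw [hxeq, Matrix.dotProduct_mulVec,
    Matrix.schur_complement_eq₁₁ B D (x ∘ Sum.inl) (x ∘ Sum.inr) hA.1]
  rcases eq_or_ne (x ∘ Sum.inr) 0 with h2 | h2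
  · have h1 : x ∘ Sum.inl ≠ 0 := by
      intro h1
      apply hx
      rw [hxeq, h1, h2]
      funext i; cases i <;> rfl
    have e1 : x ∘ Sum.inl + (A⁻¹ * B) *ᵥ (x ∘ Sum.inr) = x ∘ Sum.inl := by
      rw [h2, Matrix.mulVec_zero, add_zero]
    rw [e1, h2]
    have := hA.dotProduct_mulVec_pos h1
    rw [Matrix.dotProduct_mulVec] at this
    simpa using this
  · apply add_pos_of_nonneg_of_pos
    · have := hA.posSemidef.dotProduct_mulVec_nonneg (x ∘ Sum.inl + (A⁻¹ * B) *ᵥ (x ∘ Sum.inr))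
      rwa [Matrix.dotProduct_mulVec] at this
    · have := hschur.dotProduct_mulVec_pos h2
      rwa [Matrix.dotProduct_mulVec] at this

lemma posDef_schur₂₂ {A : Matrix m m ℂ} {B : Matrix m p ℂ} {D : Matrix p p ℂ}
    (hM : (fromBlocks A B Bᴴ D).PosDef) (hD : D.PosDef) :
    (A - B * D⁻¹ * Bᴴ).PosDef := by
  haveI : Invertible D := D.invertibleOfIsUnitDet (isUnit_iff_ne_zero.mpr hD.det_pos.ne')
  refine .of_dotProduct_mulVec_pos ((Matrix.IsHermitian.fromBlocks₂₂ A B hD.1).mp hM.1) fun x hx => ?_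
  set y : p → ℂ := -((D⁻¹ * Bᴴ) *ᵥ x) with hy
  have h := Matrix.schur_complement_eq₂₂ A B x y hD.1
  have hzero : (D⁻¹ * Bᴴ) *ᵥ x + y = 0 := by rw [hy]; exact add_neg_cancel _
  rw [hzero] at h
  simp only [star_zero, zero_dotProduct, zero_add] at h
  have hxy : (x ⊕ᵥ y) ≠ 0 := by
    intro hc
    apply hx
    funext i
    exact congrFun hc (Sum.inl i)
  have h2 := hM.dotProduct_mulVec_pos hxy
  rw [Matrix.dotProduct_mulVec, h] at h2
  simpa [Matrix.dotProduct_mulVec] using h2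

end blocks

section decomp

variable {m p : Type*} [Fintype m] [Fintype p] [DecidableEq m] [DecidableEq p]

set_option maxHeartbeats 1000000 in
/-- Variational decomposition of the Schur complement of a convex combination. -/
lemma schur_decomp (A₁ A₂ : Matrix m m ℂ) (B₁ B₂ : Matrix m p ℂ) {D₁ D₂ : Matrix p p ℂ}
    (θ η : ℝ)
    (hH₁ : D₁⁻¹ᴴ = D₁⁻¹) (hH₂ : D₂⁻¹ᴴ = D₂⁻¹)
    (hH : (θ • D₁ + η • D₂)⁻¹ᴴ = (θ • D₁ + η • D₂)⁻¹)
    (hi₁ : D₁ * D₁⁻¹ = 1) (hi₁' : D₁⁻¹ * D₁ = 1)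
    (hi₂ : D₂ * D₂⁻¹ = 1) (hi₂' : D₂⁻¹ * D₂ = 1)
    (hi : (θ • D₁ + η • D₂) * (θ • D₁ + η • D₂)⁻¹ = 1) :
    (θ • A₁ + η • A₂)
      - (θ • B₁ + η • B₂) * (θ • D₁ + η • D₂)⁻¹ * (θ • B₁ + η • B₂)ᴴ
    = θ • (A₁ - B₁ * D₁⁻¹ * B₁ᴴ) + η • (A₂ - B₂ * D₂⁻¹ * B₂ᴴ)
      + (θ • ((B₁ * D₁⁻¹ - (θ • B₁ + η • B₂) * (θ • D₁ + η • D₂)⁻¹) * D₁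
              * (B₁ * D₁⁻¹ - (θ • B₁ + η • B₂) * (θ • D₁ + η • D₂)⁻¹)ᴴ)
        + η • ((B₂ * D₂⁻¹ - (θ • B₁ + η • B₂) * (θ • D₁ + η • D₂)⁻¹) * D₂
              * (B₂ * D₂⁻¹ - (θ • B₁ + η • B₂) * (θ • D₁ + η • D₂)⁻¹)ᴴ)) := by
  set D : Matrix p p ℂ := θ • D₁ + η • D₂ with hD
  set B : Matrix m p ℂ := θ • B₁ + η • B₂ with hB
  set Z : Matrix m p ℂ := B * D⁻¹ with hZ
  have hZH : Zᴴ = D⁻¹ * Bᴴ := by rw [hZ, Matrix.conjTranspose_mul, hH]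
  have k₁ : ∀ (X : Matrix p m ℂ), D₁ * (D₁⁻¹ * X) = X := fun X => by
    rw [← Matrix.mul_assoc, hi₁, Matrix.one_mul]
  have k₂ : ∀ (X : Matrix p m ℂ), D₂ * (D₂⁻¹ * X) = X := fun X => by
    rw [← Matrix.mul_assoc, hi₂, Matrix.one_mul]
  have kD : ∀ (X : Matrix p m ℂ), D * (D⁻¹ * X) = X := fun X => by
    rw [← Matrix.mul_assoc, hi, Matrix.one_mul]
  have k₁' : ∀ (X : Matrix p m ℂ), D₁⁻¹ * (D₁ * X) = X := fun X => by
    rw [← Matrix.mul_assoc, hi₁', Matrix.one_mul]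
  have k₂' : ∀ (X : Matrix p m ℂ), D₂⁻¹ * (D₂ * X) = X := fun X => by
    rw [← Matrix.mul_assoc, hi₂', Matrix.one_mul]
  have w₁ : (B₁ * D₁⁻¹ - Z) * D₁ * (B₁ * D₁⁻¹ - Z)ᴴ
      = B₁ * (D₁⁻¹ * B₁ᴴ) - B₁ * Zᴴ - Z * B₁ᴴ + Z * (D₁ * Zᴴ) := by
    rw [Matrix.conjTranspose_sub, Matrix.conjTranspose_mul, hH₁]
    simp only [Matrix.sub_mul, Matrix.mul_sub, Matrix.mul_assoc, k₁, k₁']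
    abel
  have w₂ : (B₂ * D₂⁻¹ - Z) * D₂ * (B₂ * D₂⁻¹ - Z)ᴴ
      = B₂ * (D₂⁻¹ * B₂ᴴ) - B₂ * Zᴴ - Z * B₂ᴴ + Z * (D₂ * Zᴴ) := by
    rw [Matrix.conjTranspose_sub, Matrix.conjTranspose_mul, hH₂]
    simp only [Matrix.sub_mul, Matrix.mul_sub, Matrix.mul_assoc, k₂, k₂']
    abel
  have e1 : θ • (B₁ * Zᴴ) + η • (B₂ * Zᴴ) = B * (D⁻¹ * Bᴴ) := by
    rw [hZH, hB]
    simp only [Matrix.add_mul, Matrix.smul_mul]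
  have e2 : θ • (Z * B₁ᴴ) + η • (Z * B₂ᴴ) = B * (D⁻¹ * Bᴴ) := by
    have hr : B * (D⁻¹ * Bᴴ) = Z * Bᴴ := by rw [hZ, Matrix.mul_assoc]
    rw [hr, hB, Matrix.conjTranspose_add, Matrix.conjTranspose_smul, Matrix.conjTranspose_smul,
      star_trivial, star_trivial, Matrix.mul_add, Matrix.mul_smul, Matrix.mul_smul]
  have e3 : θ • (Z * (D₁ * Zᴴ)) + η • (Z * (D₂ * Zᴴ)) = B * (D⁻¹ * Bᴴ) := by
    have hr : B * (D⁻¹ * Bᴴ) = Z * (D * Zᴴ) := by rw [hZH, kD, hZ, Matrix.mul_assoc]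
    rw [hr, hD]
    simp only [Matrix.add_mul, Matrix.smul_mul, Matrix.mul_add, Matrix.mul_smul]
  have eL : B * D⁻¹ * Bᴴ = B * (D⁻¹ * Bᴴ) := Matrix.mul_assoc _ _ _
  rw [w₁, w₂, eL]
  have final : θ • (A₁ - B₁ * D₁⁻¹ * B₁ᴴ) + η • (A₂ - B₂ * D₂⁻¹ * B₂ᴴ)
      + (θ • (B₁ * (D₁⁻¹ * B₁ᴴ) - B₁ * Zᴴ - Z * B₁ᴴ + Z * (D₁ * Zᴴ))
        + η • (B₂ * (D₂⁻¹ * B₂ᴴ) - B₂ * Zᴴ - Z * B₂ᴴ + Z * (D₂ * Zᴴ)))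
      = (θ • A₁ + η • A₂)
        - ((θ • (B₁ * Zᴴ) + η • (B₂ * Zᴴ)) + (θ • (Z * B₁ᴴ) + η • (Z * B₂ᴴ))
          - (θ • (Z * (D₁ * Zᴴ)) + η • (Z * (D₂ * Zᴴ)))) := by
    simp only [Matrix.mul_assoc, smul_sub, smul_add]
    abel
  rw [final, e1, e2, e3]
  abel

lemma schur_decomp_exists (A₁ A₂ : Matrix m m ℂ) (B₁ B₂ : Matrix m p ℂ) {D₁ D₂ : Matrix p p ℂ}
    (hD₁ : D₁.PosDef) (hD₂ : D₂.PosDef) {θ η : ℝ} (hθ : 0 ≤ θ) (hη : 0 ≤ η)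
    (hD : (θ • D₁ + η • D₂).PosDef) :
    ∃ Q : Matrix m m ℂ, Q.PosSemidef ∧
      (θ • A₁ + η • A₂)
        - (θ • B₁ + η • B₂) * (θ • D₁ + η • D₂)⁻¹ * (θ • B₁ + η • B₂)ᴴ
      = θ • (A₁ - B₁ * D₁⁻¹ * B₁ᴴ) + η • (A₂ - B₂ * D₂⁻¹ * B₂ᴴ) + Q := by
  refine ⟨_, ?_, schur_decomp A₁ A₂ B₁ B₂ θ η hD₁.1.inv.eq hD₂.1.inv.eq hD.1.inv.eq
    (Matrix.mul_nonsing_inv _ (isUnit_iff_ne_zero.mpr hD₁.det_pos.ne'))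
    (Matrix.nonsing_inv_mul _ (isUnit_iff_ne_zero.mpr hD₁.det_pos.ne'))
    (Matrix.mul_nonsing_inv _ (isUnit_iff_ne_zero.mpr hD₂.det_pos.ne'))
    (Matrix.nonsing_inv_mul _ (isUnit_iff_ne_zero.mpr hD₂.det_pos.ne'))
    (Matrix.mul_nonsing_inv _ (isUnit_iff_ne_zero.mpr hD.det_pos.ne'))⟩
  exact (posSemidef_real_smul (hD₁.posSemidef.mul_mul_conjTranspose_same _) hθ).add
    (posSemidef_real_smul (hD₂.posSemidef.mul_mul_conjTranspose_same _) hη)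

end decomp

end StmtAux


open StmtAux

/-- With `σ_max(Φ) < 1` (i.e. `I - ΦᴴΦ ≻ 0`), the map
`K ↦ log det Λ(K)` where
`Λ(K) = I + H_r K H_rᴴ − (Φ + H_r K H_eᴴ)(I + H_e K H_eᴴ)⁻¹(Φᴴ + H_e K H_rᴴ)`
is concave on the set of positive semidefinite matrices. -/
theorem stmt_4 {nr ne nt : ℕ}
    (Hr : Matrix (Fin nr) (Fin nt) ℂ) (He : Matrix (Fin ne) (Fin nt) ℂ)
    (Φ : Matrix (Fin nr) (Fin ne) ℂ)
    (hΦ : ((1 : Matrix (Fin ne) (Fin ne) ℂ) - Φᴴ * Φ).PosDef) :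
    ConcaveOn ℝ {K : Matrix (Fin nt) (Fin nt) ℂ | K.PosSemidef}
      (fun K => Real.log
        (((1 : Matrix (Fin nr) (Fin nr) ℂ) + Hr * K * Hrᴴ
          - (Φ + Hr * K * Heᴴ) * ((1 : Matrix (Fin ne) (Fin ne) ℂ) + He * K * Heᴴ)⁻¹
            * (Φᴴ + He * K * Hrᴴ)).det.re)) := by
  classical
  have hDpd : ∀ K : Matrix (Fin nt) (Fin nt) ℂ, K.PosSemidef →
      ((1 : Matrix (Fin ne) (Fin ne) ℂ) + He * K * Heᴴ).PosDef := fun K hK =>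
    Matrix.PosDef.add_posSemidef Matrix.PosDef.one (hK.mul_mul_conjTranspose_same He)
  have hBH : ∀ K : Matrix (Fin nt) (Fin nt) ℂ, K.PosSemidef →
      (Φ + Hr * K * Heᴴ)ᴴ = Φᴴ + He * K * Hrᴴ := fun K hK => by
    rw [Matrix.conjTranspose_add, Matrix.conjTranspose_mul, Matrix.conjTranspose_mul,
      Matrix.conjTranspose_conjTranspose, hK.1.eq, ← Matrix.mul_assoc]
  have hLpd : ∀ K : Matrix (Fin nt) (Fin nt) ℂ, K.PosSemidef →
      ((1 : Matrix (Fin nr) (Fin nr) ℂ) + Hr * K * Hrᴴ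
        - (Φ + Hr * K * Heᴴ) * ((1 : Matrix (Fin ne) (Fin ne) ℂ) + He * K * Heᴴ)⁻¹
          * (Φᴴ + He * K * Hrᴴ)).PosDef := by
    intro K hK
    have hM0 : (fromBlocks (1 : Matrix (Fin nr) (Fin nr) ℂ) Φ Φᴴ
        (1 : Matrix (Fin ne) (Fin ne) ℂ)).PosDef := by
      apply posDef_fromBlocks₁₁ Φ Matrix.PosDef.one
      have h1 : (1 : Matrix (Fin nr) (Fin nr) ℂ)⁻¹ = 1 :=
        Matrix.inv_eq_right_inv (by rw [Matrix.one_mul])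
      rw [h1, Matrix.mul_one]
      exact hΦ
    have hFact : fromRows Hr He * K * (fromRows Hr He)ᴴ
        = fromBlocks (Hr * K * Hrᴴ) (Hr * K * Heᴴ) (He * K * Hrᴴ) (He * K * Heᴴ) := by
      rw [Matrix.conjTranspose_fromRows_eq_fromCols_conjTranspose, Matrix.fromRows_mul,
        Matrix.fromRows_mul_fromCols]
    have heq : fromBlocks ((1 : Matrix (Fin nr) (Fin nr) ℂ) + Hr * K * Hrᴴ) (Φ + Hr * K * Heᴴ)
          ((Φ + Hr * K * Heᴴ)ᴴ) ((1 : Matrix (Fin ne) (Fin ne) ℂ) + He * K * Heᴴ)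
        = fromBlocks 1 Φ Φᴴ 1 + fromRows Hr He * K * (fromRows Hr He)ᴴ := by
      rw [hFact, Matrix.fromBlocks_add, hBH K hK]
    have hM : (fromBlocks ((1 : Matrix (Fin nr) (Fin nr) ℂ) + Hr * K * Hrᴴ) (Φ + Hr * K * Heᴴ)
        ((Φ + Hr * K * Heᴴ)ᴴ) ((1 : Matrix (Fin ne) (Fin ne) ℂ) + He * K * Heᴴ)).PosDef := by
      rw [heq]
      exact hM0.add_posSemidef (hK.mul_mul_conjTranspose_same _)
    have := posDef_schur₂₂ hM (hDpd K hK)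
    rwa [hBH K hK] at this
  constructor
  · intro K₁ hK₁ K₂ hK₂ a b ha hb hab
    exact (posSemidef_real_smul hK₁ ha).add (posSemidef_real_smul hK₂ hb)
  · intro K₁ hK₁ K₂ hK₂ a b ha hb hab
    rcases eq_or_lt_of_le ha with h0 | ha'
    · have hb1 : b = 1 := by linarith
      simp [← h0, hb1]
    rcases eq_or_lt_of_le hb with h0 | hb'
    · have ha1 : a = 1 := by linarith
      simp [← h0, ha1]
    have hK : (a • K₁ + b • K₂).PosSemidef :=
      (posSemidef_real_smul hK₁ ha).add (posSemidef_real_smul hK₂ hb)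
    have hD₁ := hDpd K₁ hK₁
    have hD₂ := hDpd K₂ hK₂
    -- affine identities
    have haffD : a • ((1 : Matrix (Fin ne) (Fin ne) ℂ) + He * K₁ * Heᴴ)

        + b • ((1 : Matrix (Fin ne) (Fin ne) ℂ) + He * K₂ * Heᴴ)
        = (1 : Matrix (Fin ne) (Fin ne) ℂ) + He * (a • K₁ + b • K₂) * Heᴴ := by
      have h1 : a • (1 : Matrix (Fin ne) (Fin ne) ℂ) + b • 1 = 1 := by
        rw [← add_smul, hab, one_smul]
      have h2 : He * (a • K₁ + b • K₂) * Heᴴ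
          = a • (He * K₁ * Heᴴ) + b • (He * K₂ * Heᴴ) := by
        rw [Matrix.mul_add, Matrix.add_mul, Matrix.mul_smul, Matrix.mul_smul,
          Matrix.smul_mul, Matrix.smul_mul]
      calc a • ((1 : Matrix (Fin ne) (Fin ne) ℂ) + He * K₁ * Heᴴ)
            + b • ((1 : Matrix (Fin ne) (Fin ne) ℂ) + He * K₂ * Heᴴ)
          = (a • (1 : Matrix (Fin ne) (Fin ne) ℂ) + b • 1)
            + (a • (He * K₁ * Heᴴ) + b • (He * K₂ * Heᴴ)) := by
            rw [smul_add, smul_add]; abel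
        _ = (1 : Matrix (Fin ne) (Fin ne) ℂ) + He * (a • K₁ + b • K₂) * Heᴴ := by
            rw [h1, h2]
    have haffA : a • ((1 : Matrix (Fin nr) (Fin nr) ℂ) + Hr * K₁ * Hrᴴ)
        + b • ((1 : Matrix (Fin nr) (Fin nr) ℂ) + Hr * K₂ * Hrᴴ)
        = (1 : Matrix (Fin nr) (Fin nr) ℂ) + Hr * (a • K₁ + b • K₂) * Hrᴴ := by
      have h1 : a • (1 : Matrix (Fin nr) (Fin nr) ℂ) + b • 1 = 1 := by
        rw [← add_smul, hab, one_smul]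
      have h2 : Hr * (a • K₁ + b • K₂) * Hrᴴ
          = a • (Hr * K₁ * Hrᴴ) + b • (Hr * K₂ * Hrᴴ) := by
        rw [Matrix.mul_add, Matrix.add_mul, Matrix.mul_smul, Matrix.mul_smul,
          Matrix.smul_mul, Matrix.smul_mul]
      calc a • ((1 : Matrix (Fin nr) (Fin nr) ℂ) + Hr * K₁ * Hrᴴ)
            + b • ((1 : Matrix (Fin nr) (Fin nr) ℂ) + Hr * K₂ * Hrᴴ)
          = (a • (1 : Matrix (Fin nr) (Fin nr) ℂ) + b • 1)
            + (a • (Hr * K₁ * Hrᴴ) + b • (Hr * K₂ * Hrᴴ)) := by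
            rw [smul_add, smul_add]; abel
        _ = (1 : Matrix (Fin nr) (Fin nr) ℂ) + Hr * (a • K₁ + b • K₂) * Hrᴴ := by
            rw [h1, h2]
    have haffB : a • (Φ + Hr * K₁ * Heᴴ) + b • (Φ + Hr * K₂ * Heᴴ)
        = Φ + Hr * (a • K₁ + b • K₂) * Heᴴ := by
      have h1 : a • Φ + b • Φ = Φ := by rw [← add_smul, hab, one_smul]
      have h2 : Hr * (a • K₁ + b • K₂) * Heᴴ
          = a • (Hr * K₁ * Heᴴ) + b • (Hr * K₂ * Heᴴ) := by
        rw [Matrix.mul_add, Matrix.add_mul, Matrix.mul_smul, Matrix.mul_smul,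
          Matrix.smul_mul, Matrix.smul_mul]
      calc a • (Φ + Hr * K₁ * Heᴴ) + b • (Φ + Hr * K₂ * Heᴴ)
          = (a • Φ + b • Φ) + (a • (Hr * K₁ * Heᴴ) + b • (Hr * K₂ * Heᴴ)) := by
            rw [smul_add, smul_add]; abel
        _ = Φ + Hr * (a • K₁ + b • K₂) * Heᴴ := by rw [h1, h2]
    have hDsum : (a • ((1 : Matrix (Fin ne) (Fin ne) ℂ) + He * K₁ * Heᴴ)
        + b • ((1 : Matrix (Fin ne) (Fin ne) ℂ) + He * K₂ * Heᴴ)).PosDef := by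
      rw [haffD]; exact hDpd _ hK
    obtain ⟨Q, hQ, hdec⟩ := schur_decomp_exists
      ((1 : Matrix (Fin nr) (Fin nr) ℂ) + Hr * K₁ * Hrᴴ)
      ((1 : Matrix (Fin nr) (Fin nr) ℂ) + Hr * K₂ * Hrᴴ)
      (Φ + Hr * K₁ * Heᴴ) (Φ + Hr * K₂ * Heᴴ) hD₁ hD₂ ha hb hDsum
    rw [hBH K₁ hK₁, hBH K₂ hK₂, haffA, haffB, haffD] at hdec
    have hLK : (1 : Matrix (Fin nr) (Fin nr) ℂ) + Hr * (a • K₁ + b • K₂) * Hrᴴ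
        - (Φ + Hr * (a • K₁ + b • K₂) * Heᴴ)
          * ((1 : Matrix (Fin ne) (Fin ne) ℂ) + He * (a • K₁ + b • K₂) * Heᴴ)⁻¹
          * (Φᴴ + He * (a • K₁ + b • K₂) * Hrᴴ)
        = a • ((1 : Matrix (Fin nr) (Fin nr) ℂ) + Hr * K₁ * Hrᴴ
            - (Φ + Hr * K₁ * Heᴴ) * ((1 : Matrix (Fin ne) (Fin ne) ℂ) + He * K₁ * Heᴴ)⁻¹
              * (Φᴴ + He * K₁ * Hrᴴ))
          + b • ((1 : Matrix (Fin nr) (Fin nr) ℂ) + Hr * K₂ * Hrᴴ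
            - (Φ + Hr * K₂ * Heᴴ) * ((1 : Matrix (Fin ne) (Fin ne) ℂ) + He * K₂ * Heᴴ)⁻¹
              * (Φᴴ + He * K₂ * Hrᴴ)) + Q := by
      rw [← hBH _ hK, ← hdec]
    simp only [smul_eq_mul]
    rw [hLK]
    have hΛ₁ := hLpd K₁ hK₁
    have hΛ₂ := hLpd K₂ hK₂
    have hP : (a • ((1 : Matrix (Fin nr) (Fin nr) ℂ) + Hr * K₁ * Hrᴴ
        - (Φ + Hr * K₁ * Heᴴ) * ((1 : Matrix (Fin ne) (Fin ne) ℂ) + He * K₁ * Heᴴ)⁻¹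
          * (Φᴴ + He * K₁ * Hrᴴ))
        + b • ((1 : Matrix (Fin nr) (Fin nr) ℂ) + Hr * K₂ * Hrᴴ
        - (Φ + Hr * K₂ * Heᴴ) * ((1 : Matrix (Fin ne) (Fin ne) ℂ) + He * K₂ * Heᴴ)⁻¹
          * (Φᴴ + He * K₂ * Hrᴴ))).PosDef :=
      (posDef_real_smul hΛ₁ ha').add (posDef_real_smul hΛ₂ hb')
    calc a * Real.log (((1 : Matrix (Fin nr) (Fin nr) ℂ) + Hr * K₁ * Hrᴴ
            - (Φ + Hr * K₁ * Heᴴ) * ((1 : Matrix (Fin ne) (Fin ne) ℂ) + He * K₁ * Heᴴ)⁻¹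
              * (Φᴴ + He * K₁ * Hrᴴ)).det.re)
          + b * Real.log (((1 : Matrix (Fin nr) (Fin nr) ℂ) + Hr * K₂ * Hrᴴ
            - (Φ + Hr * K₂ * Heᴴ) * ((1 : Matrix (Fin ne) (Fin ne) ℂ) + He * K₂ * Heᴴ)⁻¹
              * (Φᴴ + He * K₂ * Hrᴴ)).det.re)
        ≤ Real.log ((a • ((1 : Matrix (Fin nr) (Fin nr) ℂ) + Hr * K₁ * Hrᴴ
            - (Φ + Hr * K₁ * Heᴴ) * ((1 : Matrix (Fin ne) (Fin ne) ℂ) + He * K₁ * Heᴴ)⁻¹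
              * (Φᴴ + He * K₁ * Hrᴴ))
          + b • ((1 : Matrix (Fin nr) (Fin nr) ℂ) + Hr * K₂ * Hrᴴ
            - (Φ + Hr * K₂ * Heᴴ) * ((1 : Matrix (Fin ne) (Fin ne) ℂ) + He * K₂ * Heᴴ)⁻¹
              * (Φᴴ + He * K₂ * Hrᴴ))).det.re) :=
          log_det_re_concave hΛ₁ hΛ₂ ha hb hab
      _ ≤ _ := by
          apply Real.log_le_log (Complex.pos_iff.mp hP.det_pos).1
          exact det_re_le_det_re_add hP hQ
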